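/- In the unitary Cayley graph of Z_n with n = 2^{r₁} p₂^{r₂}⋯p_t^{r_t} (t ≥ 2, odd primes), two nonadjacent distinct vertices x, y are at distance 3 if and only if x - y is odd. -/

import Mathlib

/-- The unitary Cayley graph of a commutative ring: vertices are ring elements,
with `x ~ y` iff `x ≠ y` and `x - y` is a unit. -/
def unitaryCayley (R : Type*) [CommRing R] : SimpleGraph R where
  Adj x y := x ≠ y ∧ IsUnit (x - y)
  symm := by
    constructor
    rintro x y ⟨hne, hu⟩
    exact ⟨hne.symm, by simpa [neg_sub] using hu.neg⟩
  loopless := ⟨by rintro x ⟨h, -⟩; exact h rfl⟩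

/-- A packing `k`-coloring: every vertex gets a color in `{1, …, k}`, and any two
distinct vertices with the same color `i` are at distance greater than `i`
(`edist` equals `⊤` for unreachable pairs, which counts as distance greater than `i`). -/
def SimpleGraph.IsPackingColoring {V : Type*} (G : SimpleGraph V) (k : ℕ) (c : V → ℕ) : Prop :=
  (∀ v, 1 ≤ c v ∧ c v ≤ k) ∧
    ∀ u v, u ≠ v → c u = c v → (c u : ℕ∞) < G.edist u v

/-- The packing chromatic number: the least `k` admitting a packing `k`-coloring. -/
noncomputable def SimpleGraph.packingChromaticNumber {V : Type*} (G : SimpleGraph V) : ℕ :=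
  sInf {k | ∃ c : V → ℕ, G.IsPackingColoring k c}

/-- The independence number: the largest cardinality of a set of pairwise
nonadjacent vertices. -/
noncomputable def SimpleGraph.indepNum' {V : Type*} (G : SimpleGraph V) : ℕ :=
  sSup {n | ∃ s : Finset V, (∀ u ∈ s, ∀ v ∈ s, u ≠ v → ¬ G.Adj u v) ∧ s.card = n}

/-- The tensor (direct, categorical) product of two simple graphs. -/
def tensorProd {V W : Type*} (G : SimpleGraph V) (H : SimpleGraph W) :
    SimpleGraph (V × W) where
  Adj a b := G.Adj a.1 b.1 ∧ H.Adj a.2 b.2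
  symm := ⟨fun _ _ ⟨h1, h2⟩ => ⟨h1.symm, h2.symm⟩⟩
  loopless := ⟨fun a h => G.loopless.irrefl a.1 h.1⟩

/-- The tensor (direct, categorical) product of a family of simple graphs. -/
def tensorPi {ι : Type*} [Nonempty ι] {V : ι → Type*} (G : ∀ i, SimpleGraph (V i)) :
    SimpleGraph (∀ i, V i) where
  Adj a b := ∀ i, (G i).Adj (a i) (b i)
  symm := ⟨fun _ _ h i => (h i).symm⟩
  loopless := ⟨fun a h => (G (Classical.arbitrary ι)).loopless.irrefl _ (h _)⟩


private lemma int_key : ∀ n : ℕ, n ≠ 0 → ∀ c : ℤ, (2 ∣ n → (2:ℤ) ∣ c) →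
    ∃ k : ℤ, ∀ q : ℕ, q.Prime → q ∣ n → ¬((q:ℤ) ∣ k) ∧ ¬((q:ℤ) ∣ (c - k)) := by
  intro n
  induction n using Nat.strong_induction_on with
  | _ n ih =>
    intro hn c h2
    rcases eq_or_ne n 1 with rfl | hn1
    · exact ⟨0, fun q hq hqd => ((hq.ne_one (Nat.dvd_one.mp hqd)).elim)⟩
    · set p := n.minFac with hpdef
      have hp : p.Prime := Nat.minFac_prime hn1
      have hpn : p ∣ n := Nat.minFac_dvd n
      set a := n.factorization p with hadef
      set m := n / p ^ a with hmdef
      have hmul : p ^ a * m = n := Nat.ordProj_mul_ordCompl_eq_self n p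
      have hpm : ¬ p ∣ m := Nat.not_dvd_ordCompl hp hn
      have hm0 : m ≠ 0 := (Nat.ordCompl_pos p hn).ne'
      have ha0 : 0 < a := hp.factorization_pos_of_dvd hn hpn
      have hmlt : m < n := by
        apply Nat.div_lt_self (Nat.pos_of_ne_zero hn)
        exact Nat.one_lt_pow ha0.ne' hp.one_lt
      have hmn : m ∣ n := Nat.ordCompl_dvd n p
      obtain ⟨k', hk'⟩ := ih m hmlt hm0 c (fun h => h2 (h.trans hmn))
      have hrex : ∃ r : ℤ, ¬((p:ℤ) ∣ r) ∧ ¬((p:ℤ) ∣ (c - r)) := by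
        have hple : (2:ℤ) ≤ (p:ℤ) := by exact_mod_cast hp.two_le
        have hnd1 : ¬((p:ℤ) ∣ 1) := by
          intro h
          have := Int.le_of_dvd one_pos h
          omega
        rcases eq_or_ne p 2 with hp2 | hp2
        · refine ⟨1, ?_, ?_⟩
          · rw [hp2]; norm_num
          · have hc : (2:ℤ) ∣ c := h2 (hp2 ▸ hpn)
            rw [hp2]; push_cast; omega
        · by_cases hpc : (p:ℤ) ∣ (c - 1)
          · refine ⟨2, ?_, ?_⟩
            · intro h
              have h' : p ∣ 2 := by exact_mod_cast h
              have := (Nat.prime_dvd_prime_iff_eq hp Nat.prime_two).mp h'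
              exact hp2 this
            · intro h
              have : (p:ℤ) ∣ 1 := by
                have := dvd_sub hpc h
                simpa using this
              exact hnd1 this
          · exact ⟨1, hnd1, hpc⟩
      obtain ⟨r, hr1, hr2⟩ := hrex
      have hcopN : Nat.Coprime p m := (Nat.coprime_or_dvd_of_prime hp m).resolve_right hpm
      obtain ⟨α, β, hαβ⟩ := Nat.isCoprime_iff_coprime.mpr hcopN
      refine ⟨k' * (α * p) + r * (β * m), ?_⟩
      intro q hq hqn
      have hsplit : q ∣ p ^ a ∨ q ∣ m := by
        have : q ∣ p ^ a * m := hmul ▸ hqn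
        exact (Nat.Prime.dvd_mul hq).mp this
      have hkr : (p:ℤ) ∣ (k' * (α * p) + r * (β * m) - r) :=
        ⟨(k' - r) * α, by linear_combination r * hαβ⟩
      have hkk' : (m:ℤ) ∣ (k' * (α * p) + r * (β * m) - k') :=
        ⟨(r - k') * β, by linear_combination k' * hαβ⟩
      rcases hsplit with hqp | hqm
      · have hqep : q = p := (Nat.prime_dvd_prime_iff_eq hq hp).mp (hq.dvd_of_dvd_pow hqp)
        subst hqep
        constructor
        · intro h
          exact hr1 (by have := dvd_sub h hkr; simpa using this)
        · intro h
          exact hr2 (by have := dvd_add h hkr; simpa [sub_add_sub_cancel] using this)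
      · have hq1 := hk' q hq hqm
        have hqmz : (q:ℤ) ∣ (m:ℤ) := Int.natCast_dvd_natCast.mpr hqm
        constructor
        · intro h
          exact hq1.1 (by have := dvd_sub h (hqmz.trans hkk'); simpa using this)
        · intro h
          exact hq1.2 (by have := dvd_add h (hqmz.trans hkk'); simpa [sub_add_sub_cancel] using this)

private lemma isUnit_cast_of_avoid (n : ℕ) (hn : n ≠ 0) (k : ℤ)
    (h : ∀ q : ℕ, q.Prime → q ∣ n → ¬((q:ℤ) ∣ k)) : IsUnit ((k : ZMod n)) := by
  have hg : Int.gcd k n = 1 := by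
    by_contra hg
    set g := Int.gcd k n with hgdef
    have hg0 : g ≠ 0 := by
      intro h0
      have := Int.gcd_eq_zero_iff.mp h0
      exact hn (by exact_mod_cast this.2)
    have hq : g.minFac.Prime := Nat.minFac_prime hg
    have hq1 : g.minFac ∣ g := Nat.minFac_dvd g
    have hqn : g.minFac ∣ n := hq1.trans (by
      have h' : (g:ℤ) ∣ (n:ℤ) := Int.gcd_dvd_right k n
      exact_mod_cast h')
    have hqk : (g.minFac : ℤ) ∣ k := (Int.natCast_dvd_natCast.mpr hq1).trans (Int.gcd_dvd_left k n)
    exact h g.minFac hq hqn hqk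
  obtain ⟨α, β, hαβ⟩ := Int.isCoprime_iff_gcd_eq_one.mpr hg
  have := congrArg (fun z : ℤ => (z : ZMod n)) hαβ
  push_cast at this
  simp only [ZMod.natCast_self, mul_zero, add_zero] at this
  exact IsUnit.of_mul_eq_one ((α : ZMod n)) (by linear_combination this)

private lemma sum_two_units (n : ℕ) (hn : n ≠ 0) (c : ZMod n)
    (h2 : 2 ∣ n → 2 ∣ c.val) :
    ∃ u v : ZMod n, IsUnit u ∧ IsUnit v ∧ u + v = c := by
  haveI : NeZero n := ⟨hn⟩
  obtain ⟨k, hk⟩ := int_key n hn (c.val : ℤ)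
    (fun h => by exact_mod_cast Int.natCast_dvd_natCast.mpr (h2 h))
  refine ⟨(k : ZMod n), c - (k : ZMod n),
    isUnit_cast_of_avoid n hn k (fun q hq hqn => (hk q hq hqn).1), ?_, by ring⟩
  have hcast : (((c.val : ℤ) - k : ℤ) : ZMod n) = c - (k : ZMod n) := by
    push_cast
    rw [ZMod.natCast_val, ZMod.cast_id]
  rw [← hcast]
  exact isUnit_cast_of_avoid n hn _ (fun q hq hqn => (hk q hq hqn).2)

private lemma zmod2_unit_eq_one : ∀ z : ZMod 2, IsUnit z → z = 1 := by decide

private lemma walk_parity (n : ℕ) (h2 : 2 ∣ n) {a b : ZMod n}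
    (w : (unitaryCayley (ZMod n)).Walk a b) :
    ZMod.castHom h2 (ZMod 2) (a - b) = (w.length : ZMod 2) := by
  induction w with
  | nil => simp
  | @cons u v z h p ihp =>
    have h1 : ZMod.castHom h2 (ZMod 2) (u - v) = 1 :=
      zmod2_unit_eq_one _ (h.2.map (ZMod.castHom h2 (ZMod 2)))
    have : u - z = (u - v) + (v - z) := by ring
    rw [this, map_add, h1, ihp, SimpleGraph.Walk.length_cons]
    push_cast
    ring

private lemma natCast_zmod_two (d : ℕ) : ((d : ZMod 2) = 1 ↔ d % 2 = 1) ∧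
    ((d : ZMod 2) = 0 ↔ d % 2 = 0) := by
  rw [← ZMod.natCast_mod d 2]
  rcases Nat.mod_two_eq_zero_or_one d with h | h <;> rw [h] <;> simp

theorem stmt13 (n : ℕ) (ht : 2 ≤ n.primeFactors.card) (heven : n.minFac = 2)
    (x y : ZMod n) (hxy : x ≠ y) (hadj : ¬ (unitaryCayley (ZMod n)).Adj x y) :
    (unitaryCayley (ZMod n)).dist x y = 3 ↔ Odd (x - y).val := by
  have hn0 : n ≠ 0 := by
    intro h; subst h; simp [Nat.primeFactors_zero] at ht
  haveI : NeZero n := ⟨hn0⟩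
  have h2 : 2 ∣ n := heven ▸ n.minFac_dvd
  have hn2 : 1 < n := lt_of_lt_of_le one_lt_two (Nat.le_of_dvd (Nat.pos_of_ne_zero hn0) h2)
  haveI : Fact (1 < n) := ⟨hn2⟩
  set G := unitaryCayley (ZMod n) with hG
  have adj_of_unit : ∀ a b : ZMod n, IsUnit (a - b) → G.Adj a b := by
    intro a b hu
    refine ⟨?_, hu⟩
    intro h
    rw [h, sub_self] at hu
    exact not_isUnit_zero hu
  have hvalφ : ∀ d : ZMod n, ZMod.castHom h2 (ZMod 2) d = (d.val : ZMod 2) := by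
    intro d
    rw [ZMod.castHom_apply, ← ZMod.natCast_val]
  rcases Nat.even_or_odd (x - y).val with he | ho
  · -- even case: dist = 2
    obtain ⟨u, v, hu, hv, huv⟩ := sum_two_units n hn0 (x - y) (fun _ => he.two_dvd)
    have hadj1 : G.Adj x (x - u) := adj_of_unit _ _ (by
      have h : x - (x - u) = u := by ring
      rw [h]; exact hu)
    have hadj2 : G.Adj (x - u) y := adj_of_unit _ _ (by
      have h : x - u - y = v := by linear_combination -huv
      rw [h]; exact hv)
    let w : G.Walk x y := .cons hadj1 (.cons hadj2 .nil)
    have hle : G.dist x y ≤ 2 := by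
      simpa [w] using SimpleGraph.dist_le w
    have hne0 : G.dist x y ≠ 0 := by
      rw [SimpleGraph.dist_ne_zero_iff_ne_and_reachable]
      exact ⟨hxy, w.reachable⟩
    have hne1 : G.dist x y ≠ 1 := fun h => hadj (SimpleGraph.dist_eq_one_iff_adj.mp h)
    exact iff_of_false (by omega) (by simpa using Nat.not_odd_iff_even.mpr he)
  · -- odd case: dist = 3
    have hφ1 : ZMod.castHom h2 (ZMod 2) (x - y) = 1 := by
      rw [hvalφ]
      exact (natCast_zmod_two _).1.mpr (Nat.odd_iff.mp ho)
    have hev : 2 ∣ ((x - y - 1 : ZMod n)).val := by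
      have h : ZMod.castHom h2 (ZMod 2) (x - y - 1) = 0 := by
        rw [map_sub, hφ1, map_one, sub_self]
      rw [hvalφ] at h
      exact Nat.dvd_of_mod_eq_zero ((natCast_zmod_two _).2.mp h)
    obtain ⟨u, v, hu, hv, huv⟩ := sum_two_units n hn0 (x - y - 1) (fun _ => hev)
    have hadj1 : G.Adj x (x - 1) := adj_of_unit _ _ (by
      have h : x - (x - 1) = 1 := by ring
      rw [h]; exact isUnit_one)
    have hadj2 : G.Adj (x - 1) (x - 1 - u) := adj_of_unit _ _ (by
      have h : x - 1 - (x - 1 - u) = u := by ring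
      rw [h]; exact hu)
    have hadj3 : G.Adj (x - 1 - u) y := adj_of_unit _ _ (by
      have h : x - 1 - u - y = v := by linear_combination -huv
      rw [h]; exact hv)
    let w : G.Walk x y := .cons hadj1 (.cons hadj2 (.cons hadj3 .nil))
    have hle : G.dist x y ≤ 3 := by
      simpa [w] using SimpleGraph.dist_le w
    have hne1 : G.dist x y ≠ 1 := fun h => hadj (SimpleGraph.dist_eq_one_iff_adj.mp h)
    obtain ⟨p, hp⟩ := w.reachable.exists_walk_length_eq_dist
    have hpar : ((G.dist x y : ℕ) : ZMod 2) = 1 := by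
      rw [← hp, ← walk_parity n h2 p]
      exact hφ1
    have hmod : G.dist x y % 2 = 1 := (natCast_zmod_two _).1.mp hpar
    exact iff_of_true (by omega) ho
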